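/- (Bieberbach) Every convex compact set in the plane with diameter d has area at most (π/4)·d², i.e. at most the area of the circular disk of diameter d. -/

import Mathlib

open MeasureTheory Metric Set Real
open scoped RealInnerProductSpace Pointwise

/-- The area of a planar set: its two-dimensional Lebesgue measure. -/
noncomputable def polyArea (K : Set (EuclideanSpace ℝ (Fin 2))) : ℝ := (volume K).toReal

/-- The perimeter of a planar convex body: the one-dimensional Hausdorff measure
of its boundary (for a convex polygon this is the sum of the lengths of its sides). -/
noncomputable def polyPerim (K : Set (EuclideanSpace ℝ (Fin 2))) : ℝ :=
  (μH[1] (frontier K)).toReal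

/-- The width of a planar set: the infimum over all unit directions `u` of the length of the
projection of the set onto the line spanned by `u`. -/
noncomputable def width (K : Set (EuclideanSpace ℝ (Fin 2))) : ℝ :=
  ⨅ u ∈ {u : EuclideanSpace ℝ (Fin 2) | ‖u‖ = 1},
    ((⨆ x : K, ⟪u, x.1⟫) - ⨅ x : K, ⟪u, x.1⟫)

/-- A planar set has constant width `d` if its projection onto every line has length `d`. -/
def HasConstantWidth (K : Set (EuclideanSpace ℝ (Fin 2))) (d : ℝ) : Prop :=
  ∀ u : EuclideanSpace ℝ (Fin 2), ‖u‖ = 1 →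
    ((⨆ x : K, ⟪u, x.1⟫) - ⨅ x : K, ⟪u, x.1⟫) = d

/-- Lebesgue-integral version of the polar coordinates change of variables. -/
theorem lintegral_comp_polarCoord_symm' (g : ℝ × ℝ → ENNReal) :
    ∫⁻ p, g p = ∫⁻ p in polarCoord.target, ENNReal.ofReal p.1 * g (polarCoord.symm p) := by
  set B : ℝ × ℝ → ℝ × ℝ →L[ℝ] ℝ × ℝ := fun p =>
    LinearMap.toContinuousLinearMap (Matrix.toLin (Module.Basis.finTwoProd ℝ) (Module.Basis.finTwoProd ℝ)
      !![Real.cos p.2, -p.1 * Real.sin p.2; Real.sin p.2, p.1 * Real.cos p.2])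
  have B_det : ∀ p, (B p).det = p.1 := by
    intro p
    conv_rhs => rw [← one_mul p.1, ← Real.cos_sq_add_sin_sq p.2]
    simp only [B, neg_mul, LinearMap.det_toContinuousLinearMap, LinearMap.det_toLin,
      Matrix.det_fin_two_of, sub_neg_eq_add]
    ring
  calc
    ∫⁻ p, g p = ∫⁻ p in polarCoord.source, g p := by
      rw [← setLIntegral_univ]
      exact (setLIntegral_congr polarCoord_source_ae_eq_univ).symm
    _ = ∫⁻ p in polarCoord.symm '' polarCoord.target, g p := by
      rw [polarCoord.symm_image_target_eq_source]
    _ = ∫⁻ p in polarCoord.target, ENNReal.ofReal |(B p).det| * g (polarCoord.symm p) := by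
      apply lintegral_image_eq_lintegral_abs_det_fderiv_mul volume
        polarCoord.open_target.measurableSet
        (fun p _ => (hasFDerivAt_polarCoord_symm p).hasFDerivWithinAt)
      exact polarCoord.symm.injOn
    _ = ∫⁻ p in polarCoord.target, ENNReal.ofReal p.1 * g (polarCoord.symm p) := by
      apply lintegral_congr_ae
      filter_upwards [ae_restrict_mem polarCoord.open_target.measurableSet] with p hp
      rw [B_det, abs_of_pos hp.1]

/-- Bieberbach's inequality: every convex compact set in the plane with diameter `d`
has area at most `(π/4)·d²`, the area of the disk of diameter `d`. -/
theorem bieberbach (K : Set (EuclideanSpace ℝ (Fin 2)))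
    (hconv : Convex ℝ K) (hcomp : IsCompact K)
    (d : ℝ) (hd : Metric.diam K = d) :
    polyArea K ≤ (π / 4) * d ^ 2 := by
  have hπ : (0:ℝ) < π := Real.pi_pos
  have hd0 : 0 ≤ d := hd ▸ diam_nonneg
  rcases K.eq_empty_or_nonempty with rfl | hne
  · simp only [polyArea, measure_empty, ENNReal.toReal_zero]
    positivity
  obtain ⟨O, hOK, hOmin⟩ := hcomp.exists_isMinOn hne
    ((by fun_prop : Continuous fun x : EuclideanSpace ℝ (Fin 2) => x 1).continuousOn)
  set K' : Set (ℝ × ℝ) :=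
    (fun x : EuclideanSpace ℝ (Fin 2) => (x 0 - O 0, x 1 - O 1)) '' K with hK'def
  have hKmeas : MeasurableSet K := hcomp.isClosed.measurableSet
  have hK'comp : IsCompact K' := hcomp.image (by fun_prop)
  have hK'meas : MeasurableSet K' := hK'comp.isClosed.measurableSet
  -- the translated copy has the same volume
  have hvol : volume K' = volume K := by
    have h1 : MeasurePreserving (fun p : ℝ × ℝ => p + (O 0, O 1)) volume volume :=
      measurePreserving_add_right volume _
    have h2 : MeasurePreserving (MeasurableEquiv.finTwoArrow.symm : ℝ × ℝ → (Fin 2 → ℝ))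
        volume volume := (volume_preserving_finTwoArrow ℝ).symm _
    have h3 : MeasurePreserving (MeasurableEquiv.toLp 2 (Fin 2 → ℝ))
        volume volume := (EuclideanSpace.volume_preserving_symm_measurableEquiv_toLp (Fin 2)).symm
    have hG := h3.comp (h2.comp h1)
    have himg : K' = (fun p : ℝ × ℝ => MeasurableEquiv.toLp 2 (Fin 2 → ℝ)
        (MeasurableEquiv.finTwoArrow.symm (p + (O 0, O 1)))) ⁻¹' K := by
      ext p
      simp only [hK'def, mem_image, mem_preimage]
      constructor
      · rintro ⟨x, hx, rfl⟩
        convert hx using 1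
        apply PiLp.ext
        intro i
        fin_cases i <;>
          simp [MeasurableEquiv.coe_toLp, MeasurableEquiv.finTwoArrow, Prod.ext_iff]
      · intro hp
        refine ⟨_, hp, ?_⟩
        simp [MeasurableEquiv.coe_toLp, MeasurableEquiv.finTwoArrow, Prod.ext_iff]
    rw [himg, ← hG.measure_preimage hKmeas.nullMeasurableSet]
    rfl
  have h0K' : ((0:ℝ), (0:ℝ)) ∈ K' := ⟨O, hOK, by simp⟩
  -- K' lies in the upper half plane
  have hhalf : ∀ p ∈ K', 0 ≤ p.2 := by
    rintro p ⟨x, hx, rfl⟩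
    have := hOmin hx
    simp only [mem_setOf_eq] at this
    simpa using sub_nonneg.2 this
  -- pairwise squared distances in K' are at most d²
  have hdist : ∀ p ∈ K', ∀ q ∈ K', (p.1 - q.1)^2 + (p.2 - q.2)^2 ≤ d^2 := by
    rintro p ⟨x, hx, rfl⟩ q ⟨y, hy, rfl⟩
    have h1 : dist x y ≤ d := hd ▸ dist_le_diam_of_mem hcomp.isBounded hx hy
    have h2 : dist x y ^ 2 ≤ d ^ 2 := pow_le_pow_left₀ dist_nonneg h1 2
    rw [EuclideanSpace.dist_eq, Real.sq_sqrt (by positivity)] at h2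
    simp only [Fin.sum_univ_two, Real.dist_eq, sq_abs] at h2
    have e1 : (x 0 - O 0) - (y 0 - O 0) = x 0 - y 0 := by ring
    have e2 : (x 1 - O 1) - (y 1 - O 1) = x 1 - y 1 := by ring
    rw [e1, e2]
    exact h2
  -- the radial sets and radial function
  set S : ℝ → Set ℝ := fun θ => {r : ℝ | 0 < r ∧ (r * cos θ, r * sin θ) ∈ K'} with hSdef
  set R : ℝ → ℝ := fun θ => sSup (insert 0 (S θ)) with hRdef
  have hSsub : ∀ θ, insert 0 (S θ) ⊆ Icc 0 d := by
    intro θ r hr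
    rcases hr with rfl | ⟨hr1, hr2⟩
    · exact ⟨le_refl _, hd0⟩
    · refine ⟨hr1.le, ?_⟩
      have h' : (r * cos θ) ^ 2 + (r * sin θ) ^ 2 ≤ d ^ 2 := by simpa using hdist _ hr2 _ h0K'
      nlinarith [sin_sq_add_cos_sq θ, sq_nonneg (r - d), sq_nonneg (r + d)]
  have hbdd : ∀ θ, BddAbove (insert 0 (S θ)) :=
    fun θ => BddAbove.mono (hSsub θ) bddAbove_Icc
  have hR0 : ∀ θ, 0 ≤ R θ := fun θ => le_csSup (hbdd θ) (mem_insert 0 _)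
  have hRle : ∀ θ r, 0 < r → (r * cos θ, r * sin θ) ∈ K' → r ≤ R θ :=
    fun θ r h1 h2 => le_csSup (hbdd θ) (mem_insert_of_mem _ ⟨h1, h2⟩)
  -- the extremal point in each direction belongs to K'
  have hRK : ∀ θ, (R θ * cos θ, R θ * sin θ) ∈ K' := by
    intro θ
    have hne' : (insert 0 (S θ)).Nonempty := insert_nonempty _ _
    have hcl : R θ ∈ closure (insert 0 (S θ)) := csSup_mem_closure hne' (hbdd θ)
    have hcont : Continuous fun r : ℝ => (r * cos θ, r * sin θ) := by fun_prop
    have hmapsto : (fun r : ℝ => (r * cos θ, r * sin θ)) '' insert 0 (S θ) ⊆ K' := by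
      rintro _ ⟨r, hr, rfl⟩
      rcases hr with rfl | ⟨_, hr2⟩
      · simpa using h0K'
      · exact hr2
    have hmem : (R θ * cos θ, R θ * sin θ) ∈
        closure ((fun r : ℝ => (r * cos θ, r * sin θ)) '' insert 0 (S θ)) :=
      (image_closure_subset_closure_image hcont) (mem_image_of_mem _ hcl)
    exact (hK'comp.isClosed.closure_subset_iff.2 hmapsto) hmem
  -- Pythagoras bound for perpendicular directions
  have hpyth : ∀ θ, R θ ^ 2 + R (θ + π/2) ^ 2 ≤ d ^ 2 := by
    intro θ
    have h := hdist _ (hRK θ) _ (hRK (θ + π/2))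
    rw [Real.cos_add_pi_div_two, Real.sin_add_pi_div_two] at h
    nlinarith [sin_sq_add_cos_sq θ, sq_nonneg (R θ * cos θ + R (θ + π/2) * sin θ)]
  -- the polar integrand
  set F : ℝ × ℝ → ENNReal :=
    fun q => ENNReal.ofReal q.1 * K'.indicator 1 (q.1 * cos q.2, q.1 * sin q.2) with hFdef
  have hFmeas : Measurable F := by
    have hc : Measurable fun q : ℝ × ℝ => (q.1 * cos q.2, q.1 * sin q.2) := by fun_prop
    exact (measurable_fst.ennreal_ofReal).mul ((measurable_one.indicator hK'meas).comp hc)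
  set g : ℝ → ENNReal := fun θ => ∫⁻ r in Ioi (0:ℝ), F (r, θ) with hgdef
  have hgmeas : Measurable g := hFmeas.lintegral_prod_left'
  -- sector bound
  have hgbound : ∀ θ, g θ ≤ ENNReal.ofReal (R θ ^ 2 / 2) := by
    intro θ
    have step1 : g θ ≤ ∫⁻ r in Ioi (0:ℝ),
        (Ioc 0 (R θ)).indicator (fun r => ENNReal.ofReal r) r := by
      refine lintegral_mono fun r => ?_
      rcases le_or_gt r 0 with hr | hr
      · simp [hFdef, ENNReal.ofReal_eq_zero.2 hr]
      · by_cases hmem : (r * cos θ, r * sin θ) ∈ K'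
        · have : r ∈ Ioc 0 (R θ) := ⟨hr, hRle θ r hr hmem⟩
          simp [hFdef, indicator_of_mem hmem, indicator_of_mem this]
        · simp [hFdef, indicator_of_notMem hmem]
    have step2 : (∫⁻ r in Ioi (0:ℝ),
        (Ioc 0 (R θ)).indicator (fun r => ENNReal.ofReal r) r) = ∫⁻ r in Ioc 0 (R θ),
        ENNReal.ofReal r := by
      rw [lintegral_indicator measurableSet_Ioc, Measure.restrict_restrict measurableSet_Ioc,
        inter_eq_self_of_subset_left Ioc_subset_Ioi_self]
    have step3 : (∫⁻ r in Ioc 0 (R θ), ENNReal.ofReal r) = ENNReal.ofReal (R θ ^ 2 / 2) := by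
      rw [← ofReal_integral_eq_lintegral_ofReal]
      · congr 1
        rw [← intervalIntegral.integral_of_le (hR0 θ), integral_id]
        ring
      · exact (continuous_id.integrableOn_Ioc)
      · filter_upwards [ae_restrict_mem measurableSet_Ioc] with r hr
        exact hr.1.le
    exact le_of_le_of_eq step1 (step2.trans step3)
  -- directions with negative sine contribute nothing
  have hgneg : ∀ θ ∈ Ioo (-π) (0:ℝ), g θ = 0 := by
    intro θ hθ
    have hzero : ∀ r : ℝ, F (r, θ) = 0 := by
      intro r
      rcases le_or_gt r 0 with hr | hr
      · simp [hFdef, ENNReal.ofReal_eq_zero.2 hr]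
      · have hsin : sin θ < 0 := Real.sin_neg_of_neg_of_neg_pi_lt hθ.2 hθ.1
        have hmem : (r * cos θ, r * sin θ) ∉ K' := by
          intro hmem
          have h2 : 0 ≤ r * sin θ := hhalf _ hmem
          nlinarith
        simp [hFdef, indicator_of_notMem hmem]
      -- done
    have : g θ = ∫⁻ r in Ioi (0:ℝ), 0 := lintegral_congr fun r => hzero r
    simpa using this
  -- polar-coordinates computation of the volume
  have key : volume K' = ∫⁻ θ in Ioo (-π) π, g θ := by
    have h1 : volume K' = ∫⁻ p, K'.indicator 1 p := (lintegral_indicator_one hK'meas).symm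
    rw [h1, lintegral_comp_polarCoord_symm' (K'.indicator 1)]
    have h2 : ∀ p : ℝ × ℝ, ENNReal.ofReal p.1 * K'.indicator 1 (polarCoord.symm p) = F p := by
      intro p
      simp [hFdef, polarCoord_symm_apply]
    rw [lintegral_congr h2, polarCoord_target, Measure.volume_eq_prod, ← Measure.prod_restrict,
      lintegral_prod_symm' F hFmeas]
  -- split the circle and use the quarter-turn pairing
  have hsub : Ioo (-π) π ⊆ Ioo (-π) 0 ∪ Ico 0 π := by
    intro θ hθ
    rcases lt_or_ge θ 0 with h | h
    · exact Or.inl ⟨hθ.1, h⟩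
    · exact Or.inr ⟨h, hθ.2⟩
  have step2 : (∫⁻ θ in Ioo (-π) π, g θ) ≤
      (∫⁻ θ in Ioo (-π) 0, g θ) + ∫⁻ θ in Ico 0 π, g θ := by
    refine le_trans (lintegral_mono' (Measure.restrict_mono hsub le_rfl) le_rfl) ?_
    exact lintegral_union_le _ _ _
  have z1 : (∫⁻ θ in Ioo (-π) (0:ℝ), g θ) = 0 := by
    have : (∫⁻ θ in Ioo (-π) (0:ℝ), g θ) = ∫⁻ θ in Ioo (-π) (0:ℝ), 0 := by
      refine lintegral_congr_ae ?_
      filter_upwards [ae_restrict_mem measurableSet_Ioo] with θ hθ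
      exact hgneg θ hθ
    simpa using this
  have hsplit : (∫⁻ θ in Ico (0:ℝ) π, g θ) =
      (∫⁻ θ in Ico (0:ℝ) (π/2), g θ) + ∫⁻ θ in Ico (π/2) π, g θ := by
    rw [← Ico_union_Ico_eq_Ico (by linarith : (0:ℝ) ≤ π/2) (by linarith : π/2 ≤ π),
      lintegral_union measurableSet_Ico (Ico_disjoint_Ico_same)]
  have hshift : (∫⁻ θ in Ico (π/2) π, g θ) = ∫⁻ θ in Ico (0:ℝ) (π/2), g (θ + π/2) := by
    have e := MeasurableEquiv.addRight (π/2 : ℝ)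
    have hmap : Measure.map (⇑(MeasurableEquiv.addRight (π/2 : ℝ))) volume = volume := by
      rw [MeasurableEquiv.coe_addRight]
      exact (measurePreserving_add_right volume (π/2)).map_eq
    have hpre : (⇑(MeasurableEquiv.addRight (π/2 : ℝ))) ⁻¹' (Ico (π/2) π) = Ico (0:ℝ) (π/2) := by
      ext θ
      simp only [MeasurableEquiv.coe_addRight, mem_preimage, mem_Ico]
      constructor <;> rintro ⟨h1, h2⟩ <;> constructor <;> linarith
    calc (∫⁻ θ in Ico (π/2) π, g θ)
        = ∫⁻ θ, g θ ∂(Measure.map (⇑(MeasurableEquiv.addRight (π/2 : ℝ)))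
            (volume.restrict ((⇑(MeasurableEquiv.addRight (π/2 : ℝ))) ⁻¹' (Ico (π/2) π)))) := by
          rw [← Measure.restrict_map (MeasurableEquiv.addRight (π/2 : ℝ)).measurable
            measurableSet_Ico, hmap]
      _ = ∫⁻ θ in (⇑(MeasurableEquiv.addRight (π/2 : ℝ))) ⁻¹' (Ico (π/2) π),
            g (MeasurableEquiv.addRight (π/2 : ℝ) θ) := lintegral_map_equiv g _
      _ = ∫⁻ θ in Ico (0:ℝ) (π/2), g (θ + π/2) := by rw [hpre]; rfl
  have hcomb : (∫⁻ θ in Ico (0:ℝ) (π/2), g θ) + (∫⁻ θ in Ico (0:ℝ) (π/2), g (θ + π/2))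
      = ∫⁻ θ in Ico (0:ℝ) (π/2), (g θ + g (θ + π/2)) :=
    (lintegral_add_left hgmeas _).symm
  have hbound : (∫⁻ θ in Ico (0:ℝ) (π/2), (g θ + g (θ + π/2)))
      ≤ ENNReal.ofReal (d^2/2) * ENNReal.ofReal (π/2) := by
    have hpt : ∀ θ : ℝ, g θ + g (θ + π/2) ≤ ENNReal.ofReal (d^2/2) := by
      intro θ
      calc g θ + g (θ + π/2)
          ≤ ENNReal.ofReal (R θ ^ 2 / 2) + ENNReal.ofReal (R (θ + π/2) ^ 2 / 2) :=
            add_le_add (hgbound θ) (hgbound (θ + π/2))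
        _ = ENNReal.ofReal (R θ ^ 2 / 2 + R (θ + π/2) ^ 2 / 2) :=
            (ENNReal.ofReal_add (by positivity) (by positivity)).symm
        _ ≤ ENNReal.ofReal (d^2/2) := by
            apply ENNReal.ofReal_le_ofReal
            have := hpyth θ
            linarith
    calc (∫⁻ θ in Ico (0:ℝ) (π/2), (g θ + g (θ + π/2)))
        ≤ ∫⁻ _ in Ico (0:ℝ) (π/2), ENNReal.ofReal (d^2/2) := lintegral_mono fun θ => hpt θ
      _ = ENNReal.ofReal (d^2/2) * volume (Ico (0:ℝ) (π/2)) := setLIntegral_const _ _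
      _ = ENNReal.ofReal (d^2/2) * ENNReal.ofReal (π/2) := by
          rw [Real.volume_Ico, sub_zero]
  -- put everything together
  have hKle : volume K ≤ ENNReal.ofReal (π/4 * d^2) := by
    calc volume K = volume K' := hvol.symm
      _ = ∫⁻ θ in Ioo (-π) π, g θ := key
      _ ≤ (∫⁻ θ in Ioo (-π) 0, g θ) + ∫⁻ θ in Ico 0 π, g θ := step2
      _ = (∫⁻ θ in Ico (0:ℝ) (π/2), g θ) + ∫⁻ θ in Ico (π/2) π, g θ := by
          rw [z1, zero_add, hsplit]
      _ = ∫⁻ θ in Ico (0:ℝ) (π/2), (g θ + g (θ + π/2)) := by rw [hshift, hcomb]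
      _ ≤ ENNReal.ofReal (d^2/2) * ENNReal.ofReal (π/2) := hbound
      _ = ENNReal.ofReal (π/4 * d^2) := by
          rw [← ENNReal.ofReal_mul (by positivity)]
          congr 1
          ring
  have : polyArea K ≤ π/4 * d^2 :=
    ENNReal.toReal_le_of_le_ofReal (by positivity) hKle
  linarith
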